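/- Let X be a compact metric space and let z ∈ X^ℤ be a non-periodic Toeplitz sequence with period structure (p_i). (i) If y and y' lie in the orbit closure O̅(z) and, for every i, y and y' have the same p_i-skeleton, then Per(y) = Per(y') and y(n) = y'(n) for every n ∈ Per(y). (ii) If moreover y ∈ O̅(z) is a Toeplitz sequence and y' ∈ O̅(z) has the same p_i-skeleton as y for every i, then y' = y. -/

import Mathlib

open Filter Topology

section Defs

variable {X : Type*}

/-- The shift by `m`: `(shiftZ m z) n = z (n + m)`, so `shiftZ 1` is the left shift `S`
and `shiftZ m = S^m`. -/
def shiftZ (m : ℤ) (z : ℤ → X) : ℤ → X := fun n => z (n + m)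

/-- `Per_p(z)`: the set of positions `n` such that `z m = z n` for all `m ≡ n (mod p)`. -/
def PerSet (p : ℕ) (z : ℤ → X) : Set ℤ :=
  {n : ℤ | ∀ m : ℤ, (p : ℤ) ∣ m - n → z m = z n}

/-- `Per(z) = ⋃_{p ≥ 1} Per_p(z)`. -/
def PerFull (z : ℤ → X) : Set ℤ := {n : ℤ | ∃ p : ℕ, 1 ≤ p ∧ n ∈ PerSet p z}

/-- A Toeplitz sequence: every position is periodic. -/
def IsToeplitz (z : ℤ → X) : Prop := ∀ n : ℤ, n ∈ PerFull z

/-- A non-periodic sequence: `S^m z ≠ z` for all `m ≠ 0`. -/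
def NonPeriodicSeq (z : ℤ → X) : Prop := ∀ m : ℤ, m ≠ 0 → shiftZ m z ≠ z

/-- `u` and `v` have the same `p`-skeleton. -/
def SamePSkeleton (p : ℕ) (u v : ℤ → X) : Prop :=
  PerSet p u = PerSet p v ∧ ∀ n ∈ PerSet p u, u n = v n

/-- A period structure of a (non-periodic) Toeplitz sequence `z`. -/
def IsPeriodStructure (p : ℕ → ℕ) (z : ℤ → X) : Prop :=
  (∀ i, 1 ≤ p i) ∧
  (∀ i q, 1 ≤ q → q < p i → PerSet q z ≠ PerSet (p i) z) ∧
  (∀ i, p i ∣ p (i + 1)) ∧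
  (∀ n : ℤ, ∃ i, n ∈ PerSet (p i) z)

/-- A fast growing sequence of positive integers. -/
def FastGrowing (p : ℕ → ℕ) : Prop :=
  p 0 = 1 ∧ (∀ i, p i ∣ p (i + 1)) ∧ 3 ≤ p 1 ∧ ∀ i, 3 * p i ≤ p (i + 1)

/-- `oxDefined p i` is the set of positions of the Oxtoby sequence that are filled in
after step `i` of the inductive construction (step `i+1` fills, for each `k ≡ 0` or
`-1 (mod p_{i+1}/p_i)`, the still-empty positions `J(i,k)` of the block
`[k p_i, (k+1) p_i)`). -/
def oxDefined (p : ℕ → ℕ) : ℕ → Set ℤ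
  | 0 => ∅
  | i + 1 =>
      oxDefined p i ∪
        {n : ℤ | ∃ k : ℤ,
          (((p (i + 1) / p i : ℕ) : ℤ) ∣ k ∨ ((p (i + 1) / p i : ℕ) : ℤ) ∣ (k + 1)) ∧
          k * (p i : ℤ) ≤ n ∧ n < (k + 1) * (p i : ℤ) ∧ n ∉ oxDefined p i}

/-- `J(i,k)`: the set of positions in `[k p_i, (k+1) p_i)` still undefined after step `i`. -/
def oxJ (p : ℕ → ℕ) (i : ℕ) (k : ℤ) : Set ℤ :=
  {n : ℤ | k * (p i : ℤ) ≤ n ∧ n < (k + 1) * (p i : ℤ) ∧ n ∉ oxDefined p i}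

/-- The Oxtoby sequence `z((p_i),(x_i))`: position `n` receives the value `x_i` where `i`
is the first step after which `n` is defined. -/
noncomputable def oxtoby (p : ℕ → ℕ) (x : ℕ → X) : ℤ → X :=
  fun n => x (sInf {i : ℕ | n ∈ oxDefined p i})

/-- The reverse of a bi-infinite sequence: `x⁻¹(n) = x(-n)`. -/
def revSeq (z : ℤ → X) : ℤ → X := fun n => z (-n)

/-- `[n0, n1]` is a maximal `p`-periodic block in `x`. -/
def IsMaxPeriodicBlock (p : ℕ) (x : ℤ → X) (n0 n1 : ℤ) : Prop :=
  n0 ≤ n1 ∧ Set.Icc n0 n1 ⊆ PerSet p x ∧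
    ∀ n0' n1' : ℤ, n0' ≤ n0 → n1 ≤ n1' → Set.Icc n0' n1' ⊆ PerSet p x →
      n0' = n0 ∧ n1' = n1

variable [TopologicalSpace X]

/-- The orbit closure of `z` in `X^ℤ` with the product topology. -/
def orbitClosure (z : ℤ → X) : Set (ℤ → X) :=
  closure {y : ℤ → X | ∃ m : ℤ, y = shiftZ m z}

/-- The ω-limit set of a sequence: all limits of convergent subsequences. -/
def omegaLimitSet (x : ℕ → X) : Set X :=
  {a : X | ∃ φ : ℕ → ℕ, StrictMono φ ∧ Tendsto (x ∘ φ) atTop (𝓝 a)}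

/-- Two sequences have the same topological type if exactly the same subsequences
converge. -/
def SameTopType {Y : Type*} [TopologicalSpace Y] (x : ℕ → X) (y : ℕ → Y) : Prop :=
  ∀ φ : ℕ → ℕ, StrictMono φ →
    ((∃ a, Tendsto (x ∘ φ) atTop (𝓝 a)) ↔ (∃ a, Tendsto (y ∘ φ) atTop (𝓝 a)))

/-- `f` is a conjugacy between the shift-invariant sets `A` and `B`: a homeomorphism
from `A` onto `B` commuting with the shift. -/
def IsConjugacy (A B : Set (ℤ → X)) (f : (ℤ → X) → (ℤ → X)) : Prop :=
  Set.MapsTo f A B ∧ ContinuousOn f A ∧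
    (∃ g : (ℤ → X) → (ℤ → X), Set.MapsTo g B A ∧ ContinuousOn g B ∧
      (∀ a ∈ A, g (f a) = a) ∧ (∀ b ∈ B, f (g b) = b)) ∧
    ∀ a ∈ A, f (shiftZ 1 a) = shiftZ 1 (f a)

/-- The `m`-th iterate (for `m : ℤ`) of a self-homeomorphism. -/
def iterZ {Y : Type*} [TopologicalSpace Y] (f : Y ≃ₜ Y) (m : ℤ) (a : Y) : Y :=
  ((f.toEquiv ^ m : Equiv.Perm Y)) a

end Defs

set_option linter.unusedSectionVars false
set_option linter.unusedVariables false

section EQFAux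

variable {X : Type*} [MetricSpace X]

lemma perSet_congr' {z : ℤ → X} {N : ℕ} {ν μ : ℤ} (h : ν ∈ PerSet N z)
    (hd : (N : ℤ) ∣ μ - ν) : μ ∈ PerSet N z ∧ z μ = z ν := by
  have hzz : z μ = z ν := h μ hd
  refine ⟨?_, hzz⟩
  intro m hm
  have h2 : z m = z ν := h m (by
    have := dvd_add hm hd
    rwa [show m - μ + (μ - ν) = m - ν by ring] at this)
  rw [h2, hzz]

lemma perSet_mono' {z : ℤ → X} {a b : ℕ} (h : a ∣ b) : PerSet a z ⊆ PerSet b z :=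
  fun n hn m hm => hn m ((Int.natCast_dvd_natCast.mpr h).trans hm)

lemma ulim_eq' {U : Ultrafilter ℕ} {f : ℕ → X} {a b : X}
    (hf : Tendsto f (U : Filter ℕ) (𝓝 a)) (hfb : {k | f k = b} ∈ U) : a = b := by
  have h2 : Tendsto f (U : Filter ℕ) (𝓝 b) :=
    Filter.Tendsto.congr' (by filter_upwards [hfb] with k hk using hk.symm) tendsto_const_nhds
  exact tendsto_nhds_unique hf h2

lemma exists_residue' (U : Ultrafilter ℕ) (m : ℕ → ℤ) (N : ℕ) (hN : 1 ≤ N) :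
    ∃ r : ℤ, {k | (N : ℤ) ∣ m k - r} ∈ U := by
  haveI : NeZero N := ⟨by omega⟩
  have hfin : ∃ c : ZMod N, {k | ((m k : ZMod N)) = c} ∈ U := by
    by_contra h
    push_neg at h
    have hall : ∀ c : ZMod N, {k | (m k : ZMod N) = c}ᶜ ∈ U :=
      fun c => Ultrafilter.compl_mem_iff_notMem.mpr (h c)
    have hint : (⋂ c : ZMod N, {k | (m k : ZMod N) = c}ᶜ) ∈ U :=
      Filter.iInter_mem.mpr hall
    have hempty : (⋂ c : ZMod N, {k | (m k : ZMod N) = c}ᶜ) = ∅ := by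
      ext k
      simp only [Set.mem_iInter, Set.mem_compl_iff, Set.mem_setOf_eq,
        Set.mem_empty_iff_false, iff_false, not_forall, not_not]
      exact ⟨_, rfl⟩
    rw [hempty] at hint
    exact (U : Filter ℕ).empty_notMem hint
  obtain ⟨c, hc⟩ := hfin
  refine ⟨(c.val : ℤ), Filter.mem_of_superset hc ?_⟩
  intro k hk
  have hcast : (((c.val : ℤ)) : ZMod N) = c := by
    push_cast
    simp [ZMod.natCast_val, ZMod.cast_id]
  have h3 : ((m k : ℤ) : ZMod N) = (((c.val : ℤ)) : ZMod N) := by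
    rw [hcast]; exact hk
  exact Int.ModEq.dvd ((ZMod.intCast_eq_intCast_iff _ _ _).mp h3).symm

lemma exists_seq' {z y : ℤ → X} (hy : y ∈ orbitClosure z) :
    ∃ m : ℕ → ℤ, Tendsto (fun k => shiftZ (m k) z) atTop (𝓝 y) := by
  obtain ⟨g, hg1, hg2⟩ := mem_closure_iff_seq_limit.mp hy
  choose m hm using hg1
  refine ⟨m, ?_⟩
  have : (fun k => shiftZ (m k) z) = g := by
    funext k; exact (hm k).symm
  rw [this]; exact hg2

lemma pieceA' {z y : ℤ → X} {U : Ultrafilter ℕ} {m : ℕ → ℤ}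
    (hU : ∀ n : ℤ, Tendsto (fun k => z (n + m k)) (U : Filter ℕ) (𝓝 (y n)))
    {N : ℕ} {r : ℤ} (hr : {k | (N : ℤ) ∣ m k - r} ∈ U)
    {n : ℤ} (hn : n + r ∈ PerSet N z) :
    y n = z (n + r) ∧ n ∈ PerSet N y := by
  have key : ∀ μ : ℤ, μ + r ∈ PerSet N z → y μ = z (μ + r) := by
    intro μ hμ
    refine ulim_eq' (hU μ) (Filter.mem_of_superset hr ?_)
    intro k hk
    exact hμ (μ + m k) (by rwa [show μ + m k - (μ + r) = m k - r by ring])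
  refine ⟨key n hn, ?_⟩
  intro μ hμ
  have h1 := perSet_congr' hn (show (N:ℤ) ∣ (μ + r) - (n + r) by
    rwa [show (μ + r) - (n + r) = μ - n by ring])
  rw [key μ h1.1, key n hn]
  exact h1.2

lemma pieceB' {z y : ℤ → X} (hz : IsToeplitz z) {U : Ultrafilter ℕ} {m : ℕ → ℤ}
    (hU : ∀ n : ℤ, Tendsto (fun k => z (n + m k)) (U : Filter ℕ) (𝓝 (y n)))
    {R : ℕ → ℤ} (hR : ∀ N : ℕ, 1 ≤ N → {k | (N : ℤ) ∣ m k - R N} ∈ U)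
    {q : ℕ} (hq : 1 ≤ q) {n : ℤ} (hn : n ∈ PerSet q y) :
    ∀ μ : ℤ, (q : ℤ) ∣ μ - (n + R q) → z μ = y n := by
  intro μ hμ
  obtain ⟨P, hP1, hPμ⟩ := hz μ
  have hmem : {k | (q : ℤ) ∣ m k - R q} ∩ {k | (P : ℤ) ∣ m k - R P} ∈ U :=
    Filter.inter_mem (hR q hq) (hR P hP1)
  obtain ⟨k₀, hk₀⟩ := Ultrafilter.nonempty_of_mem hmem
  have hy1 : y (μ - m k₀) = y n := hn (μ - m k₀) (by
    rw [show μ - m k₀ - n = (μ - (n + R q)) - (m k₀ - R q) by ring]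
    exact dvd_sub hμ hk₀.1)
  have hy2 : y (μ - m k₀) = z μ := by
    refine ulim_eq' (hU (μ - m k₀)) (Filter.mem_of_superset (hR P hP1) ?_)
    intro k hk
    refine hPμ (μ - m k₀ + m k) ?_
    rw [show μ - m k₀ + m k - μ = (m k - R P) - (m k₀ - R P) by ring]
    exact dvd_sub hk hk₀.2
  rw [← hy2, hy1]

lemma pieceB2' {z y : ℤ → X} (hz : IsToeplitz z) {U : Ultrafilter ℕ} {m : ℕ → ℤ}
    (hU : ∀ n : ℤ, Tendsto (fun k => z (n + m k)) (U : Filter ℕ) (𝓝 (y n)))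
    {R : ℕ → ℤ} (hR : ∀ N : ℕ, 1 ≤ N → {k | (N : ℤ) ∣ m k - R N} ∈ U)
    {q : ℕ} (hq : 1 ≤ q) {n : ℤ} (hn : n ∈ PerSet q y) :
    y n = z (n + R q) ∧ n + R q ∈ PerSet q z := by
  have h0 : z (n + R q) = y n := pieceB' hz hU hR hq hn (n + R q) (by simp)
  refine ⟨h0.symm, ?_⟩
  intro μ hμ
  rw [pieceB' hz hU hR hq hn μ hμ, h0]

lemma oneSided' (z : ℤ → X) (hz : IsToeplitz z)
    (p : ℕ → ℕ) (hp : IsPeriodStructure p z)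
    (y y' : ℤ → X) (hy : y ∈ orbitClosure z) (hy' : y' ∈ orbitClosure z)
    (hsk : ∀ i, SamePSkeleton (p i) y y')
    (n : ℤ) (q : ℕ) (hq : 1 ≤ q) (hn : n ∈ PerSet q y) :
    ∃ e : ℕ, 1 ≤ e ∧ n ∈ PerSet e y' ∧ y n = y' n := by
  obtain ⟨hp1, hpess, hpdvd, hpcov⟩ := hp
  obtain ⟨m, hm⟩ := exists_seq' hy
  obtain ⟨m', hm'⟩ := exists_seq' hy'
  set U : Ultrafilter ℕ := Ultrafilter.of atTop with hUdef
  have hUle : (U : Filter ℕ) ≤ atTop := Ultrafilter.of_le _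
  have hU : ∀ n : ℤ, Tendsto (fun k => z (n + m k)) (U : Filter ℕ) (𝓝 (y n)) :=
    fun n => ((tendsto_pi_nhds.mp hm) n).mono_left hUle
  have hU' : ∀ n : ℤ, Tendsto (fun k => z (n + m' k)) (U : Filter ℕ) (𝓝 (y' n)) :=
    fun n => ((tendsto_pi_nhds.mp hm') n).mono_left hUle
  -- residues
  have hRex : ∀ N : ℕ, ∃ r : ℤ, 1 ≤ N → {k | (N : ℤ) ∣ m k - r} ∈ U := fun N => by
    by_cases h : 1 ≤ N
    · exact (exists_residue' U m N h).imp (fun r hr _ => hr)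
    · exact ⟨0, fun h2 => absurd h2 h⟩
  choose R hR using hRex
  have hSex : ∀ N : ℕ, ∃ r : ℤ, 1 ≤ N → {k | (N : ℤ) ∣ m' k - r} ∈ U := fun N => by
    by_cases h : 1 ≤ N
    · exact (exists_residue' U m' N h).imp (fun r hr _ => hr)
    · exact ⟨0, fun h2 => absurd h2 h⟩
  choose S hS using hSex
  -- coherence of residues
  have hcohR : ∀ a b : ℕ, 1 ≤ a → 1 ≤ b → a ∣ b → (a : ℤ) ∣ R b - R a := by
    intro a b ha hb hab
    obtain ⟨k, hk⟩ := Ultrafilter.nonempty_of_mem (Filter.inter_mem (hR a ha) (hR b hb))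
    have h1 : (a:ℤ) ∣ m k - R a := hk.1
    have h2 : (a:ℤ) ∣ m k - R b := (Int.natCast_dvd_natCast.mpr hab).trans hk.2
    rw [show R b - R a = (m k - R a) - (m k - R b) by ring]
    exact dvd_sub h1 h2
  have hcohS : ∀ a b : ℕ, 1 ≤ a → 1 ≤ b → a ∣ b → (a : ℤ) ∣ S b - S a := by
    intro a b ha hb hab
    obtain ⟨k, hk⟩ := Ultrafilter.nonempty_of_mem (Filter.inter_mem (hS a ha) (hS b hb))
    have h1 : (a:ℤ) ∣ m' k - S a := hk.1
    have h2 : (a:ℤ) ∣ m' k - S b := (Int.natCast_dvd_natCast.mpr hab).trans hk.2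
    rw [show S b - S a = (m' k - S a) - (m' k - S b) by ring]
    exact dvd_sub h1 h2
  -- divisibility chain
  have hchain : ∀ i j : ℕ, i ≤ j → p i ∣ p j := by
    intro i j hij
    induction j, hij using Nat.le_induction with
    | base => exact dvd_rfl
    | succ j hij ih => exact ih.trans (hpdvd j)
  -- gcd stabilization
  set f : ℕ → ℕ := fun l => Nat.gcd q (p l) with hfdef
  have hfpos : ∀ l, 1 ≤ f l := fun l => Nat.gcd_pos_of_pos_left _ (by omega)
  have hfd : ∀ i j, i ≤ j → f i ∣ f j := fun i j hij =>
    Nat.dvd_gcd (Nat.gcd_dvd_left _ _) ((Nat.gcd_dvd_right _ _).trans (hchain i j hij))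
  have hbdd : ∀ l, f l ≤ q := fun l => Nat.le_of_dvd (by omega) (Nat.gcd_dvd_left _ _)
  have hne : (Set.range f).Nonempty := ⟨f 0, ⟨0, rfl⟩⟩
  have hbdd' : BddAbove (Set.range f) := ⟨q, by rintro _ ⟨l, rfl⟩; exact hbdd l⟩
  obtain ⟨t₀, ht₀⟩ : ∃ t, f t = sSup (Set.range f) := Nat.sSup_mem hne hbdd'
  have hmax : ∀ l, f l ≤ f t₀ := fun l => ht₀ ▸ le_csSup hbdd' ⟨l, rfl⟩
  have hstab : ∀ l, t₀ ≤ l → f l = f t₀ := fun l hl =>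
    Nat.le_antisymm (hmax l) (Nat.le_of_dvd (hfpos l) (hfd t₀ l hl))
  set e : ℕ := f t₀ with hedef
  have he1 : 1 ≤ e := hfpos t₀
  have heq : e ∣ q := Nat.gcd_dvd_left _ _
  have hep : e ∣ p t₀ := Nat.gcd_dvd_right _ _
  set p₀ : ℕ := p t₀ with hp₀def
  have hp₀1 : 1 ≤ p₀ := hp1 t₀
  -- Lemma E'': PerSet q z ⊆ PerSet e z
  have hE : ∀ ν ∈ PerSet q z, ν ∈ PerSet e z := by
    intro ν hν μ hμ
    obtain ⟨P, hPμ⟩ := hpcov μ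
    set l := max P t₀ with hldef
    have hl : μ ∈ PerSet (p l) z := perSet_mono' (hchain P l (le_max_left _ _)) hPμ
    have hgl : f l = e := hstab l (le_max_right _ _)
    have hgcd : (e : ℤ) = (q : ℤ) * Int.gcdA (q:ℤ) ((p l):ℤ) + ((p l):ℤ) * Int.gcdB (q:ℤ) ((p l):ℤ) := by
      have hb := Int.gcd_eq_gcd_ab (q : ℤ) ((p l) : ℤ)
      have h2 : Int.gcd (q:ℤ) ((p l):ℤ) = f l := by simp [hfdef, Int.gcd_natCast_natCast]
      rw [← hb, h2, hgl]
    obtain ⟨c, hc⟩ := hμ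
    have hform : μ - ν = (Int.gcdA (q:ℤ) ((p l):ℤ) * c) * (q:ℤ) + (Int.gcdB (q:ℤ) ((p l):ℤ) * c) * ((p l):ℤ) := by
      rw [hc, hgcd]; ring
    have hξ : z (ν + (Int.gcdA (q:ℤ) ((p l):ℤ) * c) * (q:ℤ)) = z ν :=
      hν _ (by rw [add_sub_cancel_left]; exact dvd_mul_left _ _)
    have hμξ : z (ν + (Int.gcdA (q:ℤ) ((p l):ℤ) * c) * (q:ℤ)) = z μ :=
      hl _ (by
        rw [show ν + (Int.gcdA (q:ℤ) ((p l):ℤ) * c) * (q:ℤ) - μ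
            = -((Int.gcdB (q:ℤ) ((p l):ℤ) * c) * ((p l):ℤ)) + ((ν + ((Int.gcdA (q:ℤ) ((p l):ℤ) * c) * (q:ℤ) + (Int.gcdB (q:ℤ) ((p l):ℤ) * c) * ((p l):ℤ))) - μ) by ring,
          ← hform]
        simp [Dvd.intro, dvd_mul_left])
    rw [← hμξ, hξ]
  -- residues mod p₀ and the difference d
  set ρ : ℤ := R p₀ with hρdef
  set σ : ℤ := S p₀ with hσdef
  set d : ℤ := σ - ρ with hddef
  -- forward and backward invariance of PerSet p₀ z under +d
  have hfwd : ∀ w ∈ PerSet p₀ z, w + d ∈ PerSet p₀ z ∧ z (w + d) = z w := by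
    intro w hw
    have hx : (w - ρ) + ρ ∈ PerSet p₀ z := by rwa [sub_add_cancel]
    have h1 := pieceA' hU (hR p₀ hp₀1) hx
    have h1v : y (w - ρ) = z w := by rw [h1.1, sub_add_cancel]
    have h2 : (w - ρ) ∈ PerSet p₀ y' := (hsk t₀).1 ▸ h1.2
    have h3 := pieceB2' hz hU' hS hp₀1 h2
    have h4 : y (w - ρ) = y' (w - ρ) := (hsk t₀).2 _ h1.2
    have hwd : w - ρ + σ = w + d := by rw [hddef]; ring
    constructor
    · rw [← hwd]; exact h3.2
    · rw [← hwd, ← h3.1, ← h4, h1v]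
  have hbwd : ∀ w ∈ PerSet p₀ z, w - d ∈ PerSet p₀ z ∧ z (w - d) = z w := by
    intro w hw
    have hx : (w - σ) + σ ∈ PerSet p₀ z := by rwa [sub_add_cancel]
    have h1 := pieceA' hU' (hS p₀ hp₀1) hx
    have h1v : y' (w - σ) = z w := by rw [h1.1, sub_add_cancel]
    have h2 : (w - σ) ∈ PerSet p₀ y := (hsk t₀).1.symm ▸ h1.2
    have h3 := pieceB2' hz hU hR hp₀1 h2
    have h4 : y (w - σ) = y' (w - σ) := (hsk t₀).2 _ h2
    have hwd : w - σ + ρ = w - d := by rw [hddef]; ring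
    constructor
    · rw [← hwd]; exact h3.2
    · rw [← hwd, ← h3.1, h4, h1v]
  have hiter : ∀ c : ℤ, ∀ w ∈ PerSet p₀ z, w + c * d ∈ PerSet p₀ z ∧ z (w + c * d) = z w := by
    intro c
    induction c using Int.induction_on with
    | zero =>
      intro w hw
      rw [show w + 0 * d = w by ring]
      exact ⟨hw, rfl⟩
    | succ c ih =>
      intro w hw
      obtain ⟨hmem, hval⟩ := ih w hw
      obtain ⟨hmem2, hval2⟩ := hfwd _ hmem
      have harr : w + ((c : ℤ) + 1) * d = (w + c * d) + d := by ring
      rw [harr]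
      exact ⟨hmem2, by rw [hval2, hval]⟩
    | pred c ih =>
      intro w hw
      obtain ⟨hmem, hval⟩ := ih w hw
      obtain ⟨hmem2, hval2⟩ := hbwd _ hmem
      have harr : w + (-(c : ℤ) - 1) * d = (w + (-(c:ℤ)) * d) - d := by ring
      rw [harr]
      exact ⟨hmem2, by rw [hval2, hval]⟩
  -- essentialness forces p₀ ∣ d
  have hpd : (p₀ : ℤ) ∣ d := by
    set g : ℕ := Int.gcd (p₀ : ℤ) d with hgdef
    have hg1 : 1 ≤ g := by
      have h0 : ((p₀ : ℤ)) ≠ 0 := by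
        simp only [ne_eq, Int.natCast_eq_zero]; omega
      have h5 : 0 < Int.gcd ((p₀ : ℕ) : ℤ) d := Int.gcd_pos_iff.mpr (Or.inl h0)
      omega
    have hgp : g ∣ p₀ := by
      have := Int.gcd_dvd_left (a := (p₀ : ℤ)) (b := d)
      exact_mod_cast this
    have hgd : (g : ℤ) ∣ d := Int.gcd_dvd_right _ _
    have hsub : PerSet p₀ z ⊆ PerSet g z := by
      intro w hw μ hμ
      obtain ⟨c, hc⟩ := hμ
      have hb := Int.gcd_eq_gcd_ab (p₀ : ℤ) d
      set A := Int.gcdA (p₀ : ℤ) d with hA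
      set B := Int.gcdB (p₀ : ℤ) d with hB
      obtain ⟨hmem, hval⟩ := hiter (B * c) w hw
      have hb' : (g : ℤ) = (p₀:ℤ) * A + d * B := hb
      have hzz : z μ = z (w + (B * c) * d) := hmem μ (by
        rw [show μ - (w + B * c * d) = (μ - w) - (B * c) * d by ring, hc, hb',
          show ((p₀:ℤ) * A + d * B) * c - B * c * d = (p₀:ℤ) * (A * c) by ring]
        exact Dvd.intro _ rfl)
      rw [hzz, hval]
    have hsup : PerSet g z ⊆ PerSet p₀ z := perSet_mono' hgp
    have hseteq : PerSet g z = PerSet p₀ z := Set.Subset.antisymm hsup hsub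
    by_cases hlt : g < p₀
    · exact absurd hseteq (hpess t₀ g hg1 hlt)
    · have hgep₀ : g = p₀ := Nat.le_antisymm (Nat.le_of_dvd (by omega) hgp) (by omega)
      rwa [hgep₀] at hgd
  -- assemble the conclusion
  have hν := pieceB2' hz hU hR hq hn
  have hνe : n + R q ∈ PerSet e z := hE _ hν.2
  -- e ∣ S e - R q
  have hcoh : (e : ℤ) ∣ S e - R q := by
    have h1 : (e : ℤ) ∣ S p₀ - S e := hcohS e p₀ he1 hp₀1 hep
    have h2 : (e : ℤ) ∣ d := (Int.natCast_dvd_natCast.mpr hep).trans hpd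
    have h3 : (e : ℤ) ∣ R p₀ - R e := hcohR e p₀ he1 hp₀1 hep
    have h4 : (e : ℤ) ∣ R q - R e := hcohR e q he1 hq heq
    rw [show S e - R q = -(S p₀ - S e) + d + (R p₀ - R e) - (R q - R e) by rw [hddef]; ring]
    exact dvd_sub (dvd_add (dvd_add h1.neg_right h2) h3) h4
  have hnse := perSet_congr' hνe (show (e:ℤ) ∣ (n + S e) - (n + R q) by
    rwa [show (n + S e) - (n + R q) = S e - R q by ring])
  have hfin := pieceA' hU' (hS e he1) hnse.1
  exact ⟨e, he1, hfin.2, by rw [hν.1, ← hnse.2, hfin.1]⟩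

end EQFAux

/-- Lemma `EQF`: if `y, y'` in the orbit closure of a non-periodic Toeplitz
sequence `z` have the same `p_i`-skeleton for all `i` (where `(p_i)` is a period structure
of `z`), then they have the same periodic part and agree on it; if moreover `y` is
Toeplitz, then `y' = y`. -/
theorem periodic_part_of_same_skeleton {X : Type*} [MetricSpace X] [CompactSpace X]
    (z : ℤ → X) (hz : IsToeplitz z) (hnp : NonPeriodicSeq z)
    (p : ℕ → ℕ) (hp : IsPeriodStructure p z)
    (y y' : ℤ → X) (hy : y ∈ orbitClosure z) (hy' : y' ∈ orbitClosure z)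
    (hsk : ∀ i, SamePSkeleton (p i) y y') :
    (PerFull y = PerFull y' ∧ ∀ n ∈ PerFull y, y n = y' n) ∧
      (IsToeplitz y → y' = y) := by
  have hsymm : ∀ i, SamePSkeleton (p i) y' y := fun i =>
    ⟨(hsk i).1.symm, fun n hn => ((hsk i).2 n ((hsk i).1.symm ▸ hn)).symm⟩
  constructor
  · constructor
    · ext n
      constructor
      · rintro ⟨q, hq, hnq⟩
        obtain ⟨e, he, hne, -⟩ := oneSided' z hz p hp y y' hy hy' hsk n q hq hnq
        exact ⟨e, he, hne⟩
      · rintro ⟨q, hq, hnq⟩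
        obtain ⟨e, he, hne, -⟩ := oneSided' z hz p hp y' y hy' hy hsymm n q hq hnq
        exact ⟨e, he, hne⟩
    · rintro n ⟨q, hq, hnq⟩
      obtain ⟨-, -, hv⟩ := (oneSided' z hz p hp y y' hy hy' hsk n q hq hnq).choose_spec
      exact hv
  · intro hty
    funext n
    obtain ⟨q, hq, hnq⟩ := hty n
    obtain ⟨-, -, hv⟩ := (oneSided' z hz p hp y y' hy hy' hsk n q hq hnq).choose_spec
    exact hv.symm
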